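/- Let R be a commutative ring and π an element of R contained in the Jacobson radical of R, such that R is an integral domain (or more generally ⋂_{n≥1} π^n R = 0). If M is a finite projective R-module such that M/πM is a free (R/πR)-module, then M is a free R-module. -/

import Mathlib

/-- Let `R` be a commutative ring and `π` an element of the Jacobson radical
of `R` such that `⋂_{n≥1} π^n R = 0`.  If `M` is a finite projective `R`-module such that
`M/πM` is free over `R/πR`, then `M` is a free `R`-module. -/
theorem statement_0 {R : Type*} [CommRing R] (π : R)
    (hJ : π ∈ Ideal.jacobson (⊥ : Ideal R))
    (hsep : (⨅ n : ℕ, Ideal.span {π} ^ (n + 1)) = (⊥ : Ideal R))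
    {M : Type*} [AddCommGroup M] [Module R M] [Module.Finite R M] [Module.Projective R M]
    (hfree : Module.Free (R ⧸ Ideal.span {π})
      (M ⧸ (Ideal.span {π} • ⊤ : Submodule R M))) :
    Module.Free R M := by
  classical
  set I : Ideal R := Ideal.span {π} with hIdef
  set N : Submodule R M := I • ⊤ with hNdef
  have hIle : I ≤ Ideal.jacobson (⊥ : Ideal R) := by
    rw [hIdef, Ideal.span_le, Set.singleton_subset_iff]; exact hJ
  -- Finiteness of the quotient over R ⧸ I
  haveI hfin : Module.Finite (R ⧸ I) (M ⧸ N) := by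
    obtain ⟨S, hS⟩ := Module.finite_def.mp (inferInstance : Module.Finite R M)
    refine ⟨⟨S.image N.mkQ, ?_⟩⟩
    rw [eq_top_iff]
    rintro x -
    obtain ⟨mm, rfl⟩ := N.mkQ_surjective x
    have hm : mm ∈ Submodule.span R (S : Set M) := by rw [hS]; trivial
    induction hm using Submodule.span_induction with
    | mem y hy =>
        exact Submodule.subset_span (by simpa using Finset.mem_image_of_mem N.mkQ hy)
    | zero => simpa using Submodule.zero_mem _
    | add a c _ _ ha hc => rw [map_add]; exact Submodule.add_mem _ ha hc
    | smul r a _ ha =>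
        rw [map_smul]
        have : r • N.mkQ a = (Ideal.Quotient.mk I r) • N.mkQ a := rfl
        rw [this]
        exact Submodule.smul_mem _ _ ha
  set ι := Module.Free.ChooseBasisIndex (R ⧸ I) (M ⧸ N)
  haveI : Fintype ι := Module.Free.ChooseBasisIndex.fintype _ _
  set b := Module.Free.chooseBasis (R ⧸ I) (M ⧸ N) with hbdef
  choose m hm using fun i : ι => N.mkQ_surjective (b i)
  set f : (ι → R) →ₗ[R] M := Fintype.linearCombination R m with hfdef
  -- key computation of the reduction of f
  have hq : ∀ x : ι → R, N.mkQ (f x) = ∑ i, Ideal.Quotient.mk I (x i) • b i := by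
    intro x
    rw [hfdef, Fintype.linearCombination_apply, map_sum]
    refine Finset.sum_congr rfl fun i _ => ?_
    rw [map_smul, hm i]
    rfl
  -- surjectivity via Nakayama
  have hFG : (⊤ : Submodule R M).FG := Module.finite_def.mp inferInstance
  have hletop : (⊤ : Submodule R M) ≤ LinearMap.range f ⊔ I • ⊤ := by
    rintro x -
    have hrepr : ∑ i, b.equivFun (N.mkQ x) i • b i = N.mkQ x := b.sum_equivFun (N.mkQ x)
    choose r hr using fun i : ι => Ideal.Quotient.mk_surjective (b.equivFun (N.mkQ x) i)
    have hy : N.mkQ (f r) = N.mkQ x := by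
      rw [hq r]
      rw [← hrepr]
      exact Finset.sum_congr rfl fun i _ => by rw [hr i]
    have hxy : x - f r ∈ N := by
      rwa [← Submodule.Quotient.mk_eq_zero, Submodule.Quotient.mk_sub,
        ← N.mkQ_apply, ← N.mkQ_apply, sub_eq_zero, eq_comm]
    refine Submodule.mem_sup.mpr ⟨f r, ⟨r, rfl⟩, x - f r, hxy, by abel⟩
  have hsurj : Function.Surjective f := by
    rw [← LinearMap.range_eq_top]
    exact top_le_iff.mp
      (Submodule.le_of_le_smul_of_le_jacobson_bot hFG hIle (le_trans hletop le_rfl))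
  -- splitting from projectivity
  obtain ⟨s, hs⟩ := Module.projective_lifting_property f LinearMap.id hsurj
  -- the kernel is contained in I • ⊤
  have hker_le : LinearMap.ker f ≤ (I • ⊤ : Submodule R (ι → R)) := by
    intro x hx
    have h0 : (∑ i, Ideal.Quotient.mk I (x i) • b i) = 0 := by
      rw [← hq x, LinearMap.mem_ker.mp hx, map_zero]
    have hcoeff : ∀ i, Ideal.Quotient.mk I (x i) = 0 := by
      have := b.equivFun.symm.injective (a₁ := fun i => Ideal.Quotient.mk I (x i)) (a₂ := 0)
      rw [b.equivFun_symm_apply, map_zero] at this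
      intro i; exact congrFun (this h0) i
    have hxi : ∀ i, x i ∈ I := fun i => Ideal.Quotient.eq_zero_iff_mem.mp (hcoeff i)
    choose a ha using fun i => Ideal.mem_span_singleton'.mp (hxi i)
    have : x = π • a := by
      funext i
      simp [← ha i, mul_comm]
    rw [this]
    exact Submodule.smul_mem_smul (Ideal.mem_span_singleton_self π) trivial
  set p : (ι → R) →ₗ[R] (ι → R) := LinearMap.id - s.comp f with hpdef
  have hfp : ∀ y, f (p y) = 0 := by
    intro y
    have := congrFun (congrArg DFunLike.coe hs) (f y)
    simp only [LinearMap.coe_comp, Function.comp_apply, LinearMap.id_apply] at this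
    simp [hpdef, map_sub, this]
  have hker_eq : LinearMap.ker f = LinearMap.range p := by
    apply le_antisymm
    · intro x hx
      refine ⟨x, ?_⟩
      have hsfx : s (f x) = 0 := by rw [LinearMap.mem_ker.mp hx, map_zero]
      simp [hpdef, hsfx]
    · rintro _ ⟨y, rfl⟩
      exact LinearMap.mem_ker.mpr (hfp y)
  have hkerFG : (LinearMap.ker f).FG := by
    rw [hker_eq, LinearMap.range_eq_map]
    exact Submodule.FG.map p (Module.finite_def.mp inferInstance)
  have hker_smul : LinearMap.ker f ≤ I • LinearMap.ker f := by
    intro x hx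
    have hx' : x ∈ (I • ⊤ : Submodule R (ι → R)) := hker_le hx
    have hpx : p x = x := by
      have hsfx : s (f x) = 0 := by rw [LinearMap.mem_ker.mp hx, map_zero]
      simp [hpdef, hsfx]
    have : x ∈ Submodule.map p (I • ⊤) := ⟨x, hx', hpx⟩
    rw [Submodule.map_smul''] at this
    refine Submodule.smul_mono le_rfl ?_ this
    rw [Submodule.map_top, ← hker_eq]
  have hker_bot : LinearMap.ker f = ⊥ :=
    Submodule.eq_bot_of_le_smul_of_le_jacobson_bot I _ hkerFG hker_smul hIle
  have hinj : Function.Injective f := LinearMap.ker_eq_bot.mp hker_bot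
  exact Module.Free.of_equiv (LinearEquiv.ofBijective f ⟨hinj, hsurj⟩)
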